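/- arXiv:1201.4753 — 2 statements merged into one kernel-verified Lean document; each statement's English description precedes it below -/
import Mathlib

section
/- Let E be a finite-dimensional complex vector space equipped with a nondegenerate symmetric bilinear form b. Then there exists a conjugate-linear involution ν : E → E such that conj(b(ν e₁, ν e₂)) = b(e₁, e₂) for all e₁, e₂ ∈ E, and b(ν e, e) > 0 for all nonzero e ∈ E. Consequently, h(e₁, e₂) := b(e₁, ν e₂) defines a positive definite Hermitian inner product on E. -/
/-- A nondegenerate symmetric bilinear form `b` on a finite-dimensional complex
vector space admits a compatible conjugate-linear involution `ν`:
`conj (b (ν e₁) (ν e₂)) = b e₁ e₂` and `b (ν e) e > 0` (a positive real) for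
`e ≠ 0`; consequently `h e₁ e₂ := b e₁ (ν e₂)` is a positive definite Hermitian
inner product. -/
theorem stmt10
    {E : Type*} [AddCommGroup E] [Module ℂ E] [FiniteDimensional ℂ E]
    (b : E →ₗ[ℂ] E →ₗ[ℂ] ℂ)
    (hsymm : ∀ x y : E, b x y = b y x)
    (hnd : ∀ v : E, (∀ w : E, b v w = 0) → v = 0) :
    ∃ ν : E →ₛₗ[starRingEnd ℂ] E,
      (∀ e : E, ν (ν e) = e) ∧
      (∀ e₁ e₂ : E, (starRingEnd ℂ) (b (ν e₁) (ν e₂)) = b e₁ e₂) ∧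
      (∀ e : E, e ≠ 0 → 0 < (b (ν e) e).re ∧ (b (ν e) e).im = 0) ∧
      (∀ e₁ e₂ : E, b e₁ (ν e₂) = (starRingEnd ℂ) (b e₂ (ν e₁))) ∧
      (∀ e : E, e ≠ 0 → 0 < (b e (ν e)).re ∧ (b e (ν e)).im = 0) := by
  classical
  have hBsymm : b.IsSymm := ⟨fun x y => hsymm x y⟩
  obtain ⟨v, hv⟩ := LinearMap.BilinForm.exists_orthogonal_basis hBsymm
  have hv' : ∀ i j, i ≠ j → b (v i) (v j) = 0 := fun i j hij => hv hij
  -- diagonal entries are nonzero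
  have hdiag : ∀ i, b (v i) (v i) ≠ 0 := by
    intro i h0
    have : v i = 0 := by
      refine hnd _ fun x => ?_
      rw [← v.sum_equivFun x, map_sum]
      refine Finset.sum_eq_zero fun j _ => ?_
      rw [map_smul, smul_eq_mul]
      rcases eq_or_ne i j with rfl | hij
      · rw [h0, mul_zero]
      · rw [hv' i j hij, mul_zero]
    exact v.ne_zero i this
  -- square roots of diagonal entries
  have hsq : ∀ i, ∃ z : ℂ, z ^ 2 = b (v i) (v i) := fun i =>
    IsAlgClosed.exists_pow_nat_eq _ (by norm_num)
  choose c hc using hsq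
  have hc0 : ∀ i, c i ≠ 0 := by
    intro i h
    apply hdiag i
    rw [← hc i, h]; ring
  -- rescaled orthonormal basis
  set w := v.unitsSMul fun i => (Units.mk0 (c i) (hc0 i))⁻¹ with hw_def
  have hwapp : ∀ i, w i = (c i)⁻¹ • v i := fun i => Module.Basis.unitsSMul_apply i
  have hw : ∀ i j, b (w i) (w j) = if i = j then 1 else 0 := by
    intro i j
    simp only [hwapp, map_smul, LinearMap.smul_apply, smul_eq_mul]
    rcases eq_or_ne i j with rfl | hij
    · rw [if_pos rfl, ← hc i]
      field_simp
      rw [div_self (hc0 i)]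
    · rw [hv' i j hij, if_neg hij]; ring
  -- coordinate formula
  have key : ∀ e₁ e₂ : E, b e₁ e₂ = ∑ i, w.equivFun e₁ i * w.equivFun e₂ i := by
    intro e₁ e₂
    conv_lhs => rw [← w.sum_equivFun e₁, ← w.sum_equivFun e₂]
    simp only [map_sum, map_smul, LinearMap.coe_sum, Finset.sum_apply,
      LinearMap.smul_apply, smul_eq_mul]
    refine Finset.sum_congr rfl fun i _ => ?_
    rw [Finset.sum_eq_single i]
    · rw [hw i i, if_pos rfl, mul_one, mul_comm]
    · intro j _ hj
      rw [hw j i, if_neg hj, mul_zero]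
    · intro h; exact absurd (Finset.mem_univ i) h
  -- the conjugation map
  set ν : E ≃ₛₗ[starRingEnd ℂ] E :=
    (w.equivFun.trans (starLinearEquiv ℂ (A := Fin (Module.finrank ℂ E) → ℂ))).trans
      w.equivFun.symm with hν_def
  have hrep : ∀ (e : E) i, w.equivFun (ν e) i = (starRingEnd ℂ) (w.equivFun e i) := by
    intro e i
    simp [hν_def, starLinearEquiv, Finsupp.single_apply]
  have hnz : ∀ e : E, e ≠ 0 → ∃ i, w.equivFun e i ≠ 0 := by
    intro e he
    by_contra h
    push_neg at h
    apply he
    rw [← w.sum_equivFun e]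
    exact Finset.sum_eq_zero fun i _ => by rw [h i, zero_smul]
  refine ⟨ν, ?_, ?_, ?_, ?_, ?_⟩
  all_goals simp only [LinearEquiv.coe_coe]
  · intro e
    apply w.equivFun.injective
    funext i
    rw [hrep, hrep, Complex.conj_conj]
  · intro e₁ e₂
    rw [key, key, map_sum]
    refine Finset.sum_congr rfl fun i _ => ?_
    rw [map_mul, hrep, hrep, Complex.conj_conj, Complex.conj_conj]
  · intro e he
    obtain ⟨i₀, hi₀⟩ := hnz e he
    have h1 : b (ν e) e = ↑(∑ i, Complex.normSq (w.equivFun e i)) := by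
      rw [key, Complex.ofReal_sum]
      refine Finset.sum_congr rfl fun i _ => ?_
      rw [hrep, ← Complex.normSq_eq_conj_mul_self]
    rw [h1, Complex.ofReal_re, Complex.ofReal_im]
    exact ⟨Finset.sum_pos' (fun i _ => Complex.normSq_nonneg _)
      ⟨i₀, Finset.mem_univ _, Complex.normSq_pos.mpr hi₀⟩, rfl⟩
  · intro e₁ e₂
    rw [key, key, map_sum]
    refine Finset.sum_congr rfl fun i _ => ?_
    rw [map_mul, hrep, hrep, Complex.conj_conj]
    ring
  · intro e he
    obtain ⟨i₀, hi₀⟩ := hnz e he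
    have h1 : b e (ν e) = ↑(∑ i, Complex.normSq (w.equivFun e i)) := by
      rw [key, Complex.ofReal_sum]
      refine Finset.sum_congr rfl fun i _ => ?_
      rw [hrep, Complex.mul_conj]
    rw [h1, Complex.ofReal_re, Complex.ofReal_im]
    exact ⟨Finset.sum_pos' (fun i _ => Complex.normSq_nonneg _)
      ⟨i₀, Finset.mem_univ _, Complex.normSq_pos.mpr hi₀⟩, rfl⟩
end

section
/- Let W be a 2n-dimensional real inner product space and K an antisymmetric endomorphism. The Pfaffian defined via the Berezin integral of exp(𝐊) satisfies Pf(K)² = det(K), where 𝐊 = (1/2)Σ⟨w_i, K w_j⟩ ŵ^i ∧ ŵ^j. -/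
open ExteriorAlgebra Module

universe u


/-- Expansion of a power of a sum in a (possibly noncommutative) ring as a sum of
ordered products over all index functions. -/
theorem sum_pow_expand {A : Type*} [Ring A] (n : ℕ) (a : Fin n → A) :
    ∀ m : ℕ, (∑ i, a i) ^ m = ∑ f : Fin m → Fin n, (List.ofFn fun k => a (f k)).prod := by
  intro m
  induction m with
  | zero => simp
  | succ m ih =>
      rw [pow_succ', ih, Finset.mul_sum]
      simp_rw [Finset.sum_mul]
      rw [Finset.sum_comm]
      rw [← Equiv.sum_comp (Fin.consEquiv fun _ => Fin n)
        (fun g : Fin (m+1) → Fin n => (List.ofFn fun k => a (g k)).prod)]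
      rw [Fintype.sum_prod_type]
      apply Finset.sum_congr rfl
      intro i _
      apply Finset.sum_congr rfl
      intro f _
      simp [Fin.consEquiv, List.ofFn_succ]

/-- pull scalars out of an `ofFn` product. -/
theorem ofFn_smul_prod {A : Type*} [Ring A] [Algebra ℝ A] :
    ∀ (m : ℕ) (c : Fin m → ℝ) (z : Fin m → A),
    (List.ofFn fun k => c k • z k).prod = (∏ k, c k) • (List.ofFn fun k => z k).prod := by
  intro m
  induction m with
  | zero => simp
  | succ m ih =>
      intro c z
      rw [List.ofFn_succ, List.ofFn_succ, List.prod_cons, List.prod_cons,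
        ih (fun k => c k.succ) (fun k => z k.succ), Fin.prod_univ_succ]
      rw [smul_mul_assoc, mul_smul_comm, smul_smul]



theorem skew_pair {E : Type*} [NormedAddCommGroup E] [InnerProductSpace ℝ E]
    [FiniteDimensional ℝ E] (K : E →ₗ[ℝ] E)
    (hK : ∀ x y : E, (inner ℝ (K x) y : ℝ) = -(inner ℝ x (K y) : ℝ))
    (hdim : 2 ≤ finrank ℝ E) :
    ∃ (x y : E) (lam0 : ℝ), ‖x‖ = 1 ∧ ‖y‖ = 1 ∧ (inner ℝ x y : ℝ) = 0 ∧
      K x = lam0 • y ∧ K y = -lam0 • x := by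
  by_cases hz : K = 0
  · have h0 : (0:ℕ) < finrank ℝ E := by omega
    have h1 : (1:ℕ) < finrank ℝ E := by omega
    set b := stdOrthonormalBasis ℝ E
    refine ⟨b ⟨0, h0⟩, b ⟨1, h1⟩, 0, b.orthonormal.1 _, b.orthonormal.1 _, ?_, ?_, ?_⟩
    · exact b.orthonormal.2 (by simp)
    · simp [hz]
    · simp [hz]
  · set S := K ∘ₗ K with hS_def
    have hS : S.IsSymmetric := by
      intro a c
      have h1 := hK (K a) c
      have h2 := hK a (K c)
      simp only [hS_def, LinearMap.comp_apply]
      rw [h1, h2, neg_neg]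
    obtain ⟨i, hi⟩ : ∃ i : Fin (finrank ℝ E),
        hS.eigenvalues rfl i ≠ 0 := by
      by_contra hall
      push_neg at hall
      apply hz
      have hSzero : S = 0 := by
        apply Basis.ext (hS.eigenvectorBasis rfl).toBasis
        intro i
        have hev := hS.hasEigenvector_eigenvectorBasis rfl i
        have := hev.1
        rw [Module.End.mem_eigenspace_iff] at this
        simp only [OrthonormalBasis.coe_toBasis]
        rw [this, hall i]
        simp
      ext x
      have h3 : (inner ℝ (K x) (K x) : ℝ) = 0 := by
        rw [hK x (K x)]
        have : K (K x) = 0 := by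
          have := congrArg (fun f => f x) hSzero
          simpa [hS_def] using this
        simp [this]
      simpa using inner_self_eq_zero.mp h3
  -- nonzero eigenvalue case
    set x := hS.eigenvectorBasis rfl i with hx_def
    have hxnorm : ‖x‖ = 1 := (hS.eigenvectorBasis rfl).orthonormal.1 i
    have hev := hS.hasEigenvector_eigenvectorBasis rfl i
    have hSx : S x = (hS.eigenvalues rfl i : ℝ) • x := by
      have := hev.1; rwa [Module.End.mem_eigenspace_iff] at this
    set mu : ℝ := hS.eigenvalues rfl i
    have hmu : mu = -‖K x‖^2 := by
      have h1 : (inner ℝ (S x) x : ℝ) = mu * ‖x‖^2 := by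
        rw [hSx, real_inner_smul_left, real_inner_self_eq_norm_sq]
      have h2 : (inner ℝ (S x) x : ℝ) = -‖K x‖^2 := by
        have := hK (K x) x
        simp only [hS_def, LinearMap.comp_apply]
        rw [this, real_inner_self_eq_norm_sq]
      rw [h1] at h2
      rw [hxnorm] at h2
      simpa using h2
    have hKx_ne : ‖K x‖ ≠ 0 := by
      intro h
      apply hi
      show mu = 0
      rw [hmu, h]; ring
    set lam0 : ℝ := ‖K x‖ with hlam0
    have hlam0ne : lam0 ≠ 0 := hKx_ne
    refine ⟨x, lam0⁻¹ • K x, lam0, hxnorm, ?_, ?_, ?_, ?_⟩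
    · rw [norm_smul]
      simp [hlam0, abs_of_nonneg (norm_nonneg _), hKx_ne]
      exact inv_mul_cancel₀ hKx_ne
    · rw [real_inner_smul_right]
      have h1 := hK x x
      have h2 : (inner ℝ x (K x) : ℝ) = (inner ℝ (K x) x : ℝ) := real_inner_comm _ _
      have : (inner ℝ x (K x) : ℝ) = 0 := by rw [h2] at h1 ⊢; linarith [h1]
      rw [this, mul_zero]
    · rw [smul_smul, mul_inv_cancel₀ hlam0ne, one_smul]
    · rw [map_smul]
      have : K (K x) = mu • x := hSx
      rw [this, smul_smul, hmu, hlam0]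
      congr 1
      field_simp

theorem skew_canonical : ∀ (m : ℕ) (E : Type u) [NormedAddCommGroup E]
    [InnerProductSpace ℝ E] [FiniteDimensional ℝ E] (K : E →ₗ[ℝ] E),
    (∀ x y : E, (inner ℝ (K x) y : ℝ) = -(inner ℝ x (K y) : ℝ)) →
    finrank ℝ E = 2 * m →
    ∃ (u v : Fin m → E) (lam : Fin m → ℝ),
      Orthonormal ℝ (fun p : Fin m × Fin 2 => if p.2 = 0 then u p.1 else v p.1) ∧
      (∀ k, K (u k) = lam k • v k) ∧ (∀ k, K (v k) = -lam k • u k) := by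
  intro m
  induction m with
  | zero =>
      intro E _ _ _ K hK hm
      refine ⟨Fin.elim0, Fin.elim0, Fin.elim0, ?_, fun k => k.elim0, fun k => k.elim0⟩
      constructor
      · rintro ⟨k, t⟩; exact k.elim0
      · rintro ⟨k, t⟩; exact k.elim0
  | succ m ih =>
      intro E _ _ _ K hK hm
      obtain ⟨x, y, lam0, hx1, hy1, hxy, hKx, hKy⟩ := skew_pair K hK (by omega)
      set U : Submodule ℝ E := Submodule.span ℝ {x, y} with hU
      have hxU : x ∈ U := Submodule.subset_span (by simp)
      have hyU : y ∈ U := Submodule.subset_span (by simp)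
      have hzx : ∀ z ∈ Uᗮ, (inner ℝ x z : ℝ) = 0 :=
        fun z hz => (Submodule.mem_orthogonal _ _).mp hz x hxU
      have hzy : ∀ z ∈ Uᗮ, (inner ℝ y z : ℝ) = 0 :=
        fun z hz => (Submodule.mem_orthogonal _ _).mp hz y hyU
      have hUinv : ∀ z ∈ Uᗮ, K z ∈ Uᗮ := by
        intro z hz
        rw [Submodule.mem_orthogonal]
        intro q hq
        rw [hU, Submodule.mem_span_pair] at hq
        obtain ⟨a, b, rfl⟩ := hq
        have hzy' : (inner ℝ z y : ℝ) = 0 := by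
          rw [real_inner_comm]; exact hzy z hz
        have hzx' : (inner ℝ z x : ℝ) = 0 := by
          rw [real_inner_comm]; exact hzx z hz
        have h1 : (inner ℝ x (K z) : ℝ) = 0 := by
          rw [real_inner_comm, hK z x, hKx, real_inner_smul_right, hzy']; ring
        have h2 : (inner ℝ y (K z) : ℝ) = 0 := by
          rw [real_inner_comm, hK z y, hKy, real_inner_smul_right, hzx']; ring
        rw [inner_add_left, real_inner_smul_left, real_inner_smul_left, h1, h2]; ring
      set K' : ↥Uᗮ →ₗ[ℝ] ↥Uᗮ := K.restrict hUinv with hK'def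
      have hK' : ∀ a b : ↥Uᗮ, (inner ℝ (K' a) b : ℝ) = -(inner ℝ a (K' b) : ℝ) := by
        intro a b
        exact hK (a : E) (b : E)
      have hon2 : Orthonormal ℝ ![x, y] := by
        constructor
        · intro i
          fin_cases i
          · simpa using hx1
          · simpa using hy1
        · intro i j hij
          fin_cases i <;> fin_cases j <;>
            simp only [Matrix.cons_val_zero, Matrix.cons_val_one, Matrix.head_cons]
          · exact absurd rfl hij
          · exact hxy
          · rw [real_inner_comm]; exact hxy
          · exact absurd rfl hij
      have hUrank : finrank ℝ U = 2 := by
        have hli := hon2.linearIndependent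
        have hU2 : U = Submodule.span ℝ (Set.range ![x, y]) := by
          rw [hU]; congr 1; simp [Matrix.range_cons, Matrix.range_empty]
          ext; simp [or_comm]
        rw [hU2, finrank_span_eq_card hli]; simp
      have horth_rank : finrank ℝ ↥Uᗮ = 2 * m := by
        have := Submodule.finrank_add_finrank_orthogonal U
        omega
      obtain ⟨u', v', lam', hon', hKu', hKv'⟩ := ih ↥Uᗮ K' hK' horth_rank
      refine ⟨Fin.cases x (fun k => (u' k : E)), Fin.cases y (fun k => (v' k : E)),
        Fin.cases lam0 lam', ?_, ?_, ?_⟩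
      · constructor
        · rintro ⟨k, t⟩
          simp only
          rcases Fin.eq_zero_or_eq_succ k with rfl | ⟨k, rfl⟩
          · fin_cases t
            · simpa using hx1
            · simpa using hy1
          · have h := hon'.1 (k, t)
            simp only [Fin.cases_succ]
            fin_cases t
            · simpa using hon'.1 (k, 0)
            · simpa using hon'.1 (k, 1)
        · rintro ⟨k, t⟩ ⟨k', t'⟩ hne
          simp only
          rcases Fin.eq_zero_or_eq_succ k with rfl | ⟨k, rfl⟩ <;>
            rcases Fin.eq_zero_or_eq_succ k' with rfl | ⟨k', rfl⟩
          · simp only [Fin.cases_zero]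
            fin_cases t <;> fin_cases t'
            · exact absurd rfl hne
            · simpa using hxy
            · rw [real_inner_comm]; simpa using hxy
            · exact absurd rfl hne
          · simp only [Fin.cases_zero, Fin.cases_succ]
            have hmem2 : (if t' = 0 then (u' k' : E) else (v' k' : E)) ∈ Uᗮ := by
              split <;> exact SetLike.coe_mem _
            have hmem1 : (if t = 0 then x else y) ∈ U := by
              split <;> assumption
            exact (Submodule.mem_orthogonal _ _).mp hmem2 _ hmem1
          · simp only [Fin.cases_zero, Fin.cases_succ]
            have hmem2 : (if t = 0 then (u' k : E) else (v' k : E)) ∈ Uᗮ := by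
              split <;> exact SetLike.coe_mem _
            have hmem1 : (if t' = 0 then x else y) ∈ U := by
              split <;> assumption
            rw [real_inner_comm]
            exact (Submodule.mem_orthogonal _ _).mp hmem2 _ hmem1
          · simp only [Fin.cases_succ]
            have hne2 : ((k, t) : Fin m × Fin 2) ≠ (k', t') := by
              intro h
              apply hne
              rw [Prod.ext_iff] at h ⊢
              exact ⟨congrArg Fin.succ h.1, h.2⟩
            have h0 := hon'.2 hne2
            simp only at h0
            rw [← apply_ite (Subtype.val : ↥Uᗮ → E),
              ← apply_ite (Subtype.val : ↥Uᗮ → E)]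
            exact h0
      · intro k
        induction k using Fin.cases with
        | zero => simpa using hKx
        | succ k =>
            simp only [Fin.cases_succ]
            have := congrArg (Subtype.val) (hKu' k)
            simpa [hK'def] using this
      · intro k
        induction k using Fin.cases with
        | zero => simpa using hKy
        | succ k =>
            simp only [Fin.cases_succ]
            have := congrArg (Subtype.val) (hKv' k)
            simpa [hK'def] using this


def pairEquiv (n : ℕ) : Fin n × Fin 2 ≃ Fin (2 * n) :=
  finProdFinEquiv.trans (finCongr (mul_comm n 2))

theorem pairEquiv_val (n : ℕ) (k : Fin n) (t : Fin 2) :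
    ((pairEquiv n (k, t)) : ℕ) = 2 * (k : ℕ) + (t : ℕ) := by
  simp [pairEquiv, finProdFinEquiv]
  omega

theorem ofFn_eq_range_map {A : Type*} (N : ℕ) (g : Fin N → A) (a : ℕ → A)
    (h : ∀ j : Fin N, a j = g j) : List.ofFn g = (List.range N).map a := by
  apply List.ext_getElem (by simp)
  intro i h1 h2
  simp only [List.getElem_ofFn, List.getElem_map, List.getElem_range]
  exact (h ⟨i, by simpa using h1⟩).symm

theorem range_pair_prod {A : Type*} [Monoid A] (a : ℕ → A) :
    ∀ m : ℕ, ((List.range (2*m)).map a).prod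
      = ((List.range m).map (fun k => a (2*k) * a (2*k+1))).prod := by
  intro m
  induction m with
  | zero => simp
  | succ m ih =>
      have h2 : 2 * (m+1) = (2*m + 1) + 1 := by ring
      rw [h2, List.range_succ, List.range_succ, List.range_succ]
      simp only [List.map_append, List.prod_append, List.map_cons, List.map_nil,
        List.prod_cons, List.prod_nil]
      rw [ih]
      simp [mul_assoc]

theorem prod_pairs {W : Type*} [AddCommGroup W] [Module ℝ W] (n : ℕ)
    (g : Fin n × Fin 2 → W) :
    ιMulti ℝ (2*n) (g ∘ (pairEquiv n).symm)
      = (List.ofFn fun k : Fin n => ι ℝ (g (k,0)) * ι ℝ (g (k,1))).prod := by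
  rw [ιMulti_apply]
  set a : ℕ → ExteriorAlgebra ℝ W := fun j =>
    if h : j < 2*n then ι ℝ ((g ∘ (pairEquiv n).symm) ⟨j, h⟩) else 1 with ha
  rw [ofFn_eq_range_map (2*n) _ a (fun j => by simp [ha]), range_pair_prod a n]
  rw [ofFn_eq_range_map n _ (fun k => a (2*k) * a (2*k+1)) ?_]
  intro k
  have h0 : 2 * (k:ℕ) < 2*n := by omega
  have h1 : 2 * (k:ℕ) + 1 < 2*n := by omega
  have e0 : (pairEquiv n).symm ⟨2*(k:ℕ), h0⟩ = (k, 0) := by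
    rw [Equiv.symm_apply_eq]
    exact Fin.ext (by rw [pairEquiv_val]; simp)
  have e1 : (pairEquiv n).symm ⟨2*(k:ℕ)+1, h1⟩ = (k, 1) := by
    rw [Equiv.symm_apply_eq]
    exact Fin.ext (by rw [pairEquiv_val]; simp)
  simp only [ha, h0, h1, dif_pos, Function.comp_apply, e0, e1]

theorem iota_anticomm {W : Type*} [AddCommGroup W] [Module ℝ W] (x y : W) :
    ι ℝ x * ι ℝ y = -(ι ℝ y * ι ℝ x) := by
  have h := ι_sq_zero (R := ℝ) (x + y)
  rw [map_add, add_mul, mul_add, mul_add, ι_sq_zero, ι_sq_zero] at h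
  have h2 : ι ℝ x * ι ℝ y + ι ℝ y * ι ℝ x = 0 := by
    rw [← h]; abel
  exact eq_neg_of_add_eq_zero_left h2

theorem iota_repr {W : Type*} [NormedAddCommGroup W] [InnerProductSpace ℝ W]
    {I : Type*} [Fintype I] (b : OrthonormalBasis I ℝ W) (x : W) :
    ∑ i, (inner ℝ (b i) x : ℝ) • ι ℝ (b i) = ι ℝ x := by
  have h := b.sum_repr x
  simp_rw [b.repr_apply_apply] at h
  conv_rhs => rw [← h]
  rw [map_sum]
  simp_rw [map_smul]

theorem trace_form_indep {W : Type*} [NormedAddCommGroup W] [InnerProductSpace ℝ W]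
    (K : W →ₗ[ℝ] W)
    (hK : ∀ x y : W, (inner ℝ (K x) y : ℝ) = -(inner ℝ x (K y) : ℝ))
    {I J : Type*} [Fintype I] [Fintype J]
    (b : OrthonormalBasis I ℝ W) (c : OrthonormalBasis J ℝ W) :
    ∑ i, ι ℝ (K (b i)) * ι ℝ (b i) = ∑ k, ι ℝ (K (c k)) * ι ℝ (c k) := by
  calc ∑ i, ι ℝ (K (b i)) * ι ℝ (b i)
      = ∑ i, (∑ k, (inner ℝ (c k) (K (b i)) : ℝ) • ι ℝ (c k)) * ι ℝ (b i) := by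
        simp_rw [iota_repr]
    _ = ∑ k, ∑ i, (inner ℝ (c k) (K (b i)) : ℝ) • (ι ℝ (c k) * ι ℝ (b i)) := by
        simp_rw [Finset.sum_mul, smul_mul_assoc]
        rw [Finset.sum_comm]
    _ = ∑ k, ∑ i, (inner ℝ (b i) (K (c k)) : ℝ) • (ι ℝ (b i) * ι ℝ (c k)) := by
        apply Finset.sum_congr rfl; intro k _
        apply Finset.sum_congr rfl; intro i _
        have h1 : (inner ℝ (c k) (K (b i)) : ℝ) = -(inner ℝ (b i) (K (c k)) : ℝ) := by
          have h2 := hK (c k) (b i)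
          rw [real_inner_comm (b i) (K (c k))] at h2
          linarith
        rw [h1, iota_anticomm (c k) (b i), smul_neg, neg_smul, neg_neg]
    _ = ∑ k, ι ℝ (K (c k)) * ι ℝ (c k) := by
        apply Finset.sum_congr rfl; intro k _
        simp_rw [← smul_mul_assoc]
        rw [← Finset.sum_mul, iota_repr]

/-- `Pf(K)² = det K` for an antisymmetric endomorphism `K` of a `2n`-dimensional real
inner product space.  The Pfaffian is the Berezin integral of `exp 𝐊`, where
`𝐊 = (1/2) ∑ ⟨w i, K (w j)⟩ ŵ^i ∧ ŵ^j` in the exterior algebra (via the orthonormal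
basis `w`), and the Berezin integral `B` vanishes on components of degree `≠ 2n` and
sends the top basis element `w^1 ∧ ⋯ ∧ w^{2n}` to `1`. -/
theorem stmt15
    {W : Type*} [NormedAddCommGroup W] [InnerProductSpace ℝ W]
    (n : ℕ)
    (w : OrthonormalBasis (Fin (2 * n)) ℝ W)
    (K : W →ₗ[ℝ] W)
    (hK : ∀ x y : W, (inner ℝ (K x) y : ℝ) = -(inner ℝ x (K y) : ℝ))
    (Kform : ExteriorAlgebra ℝ W)
    (hKform : Kform = (1 / 2 : ℝ) •
      ∑ i : Fin (2 * n), ∑ j : Fin (2 * n),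
        (inner ℝ (w i) (K (w j)) : ℝ) • (ι ℝ (w i) * ι ℝ (w j)))
    (B : ExteriorAlgebra ℝ W →ₗ[ℝ] ℝ)
    (hB0 : ∀ i : ℕ, i ≠ 2 * n →
      ∀ x ∈ (LinearMap.range (ι ℝ : W →ₗ[ℝ] ExteriorAlgebra ℝ W)) ^ i, B x = 0)
    (hB1 : B ((List.ofFn fun i : Fin (2 * n) => ι ℝ (w i)).prod) = 1) :
    (B (∑ k ∈ Finset.range (2 * n + 1),
        ((k.factorial : ℝ))⁻¹ • Kform ^ k)) ^ 2 = LinearMap.det K := by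
  haveI : FiniteDimensional ℝ W := Module.Finite.of_basis w.toBasis
  have hrank : finrank ℝ W = 2 * n := by
    rw [finrank_eq_card_basis w.toBasis, Fintype.card_fin]
  obtain ⟨u, v, lam, honE, hKu, hKv⟩ := skew_canonical n W K hK hrank
  set Ep : Fin n × Fin 2 → W := fun p => if p.2 = 0 then u p.1 else v p.1 with hEp
  set pq := pairEquiv n
  set bE : Fin (2*n) → W := Ep ∘ pq.symm with hbE
  have honb : Orthonormal ℝ bE := honE.comp _ pq.symm.injective
  have hspan : ⊤ ≤ Submodule.span ℝ (Set.range bE) :=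
    (Submodule.eq_top_of_finrank_eq (by
      rw [finrank_span_eq_card honb.linearIndependent]; simp [hrank])).ge
  set EB : OrthonormalBasis (Fin (2*n)) ℝ W := OrthonormalBasis.mk honb hspan with hEB
  have hEBcoe : ⇑EB = bE := by rw [hEB]; exact OrthonormalBasis.coe_mk _ _
  -- the Berezin functional as an alternating map equals the determinant w.r.t. w
  set F := B.compAlternatingMap (ιMulti ℝ (2*n)) with hF
  have hFdet : ∀ vf : Fin (2*n) → W, F vf = w.toBasis.det vf := by
    intro vf
    have h := AlternatingMap.eq_smul_basis_det w.toBasis F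
    rw [h]
    have hFw : F ⇑w.toBasis = 1 := by
      rw [hF]
      simp only [LinearMap.compAlternatingMap_apply, ιMulti_apply,
        OrthonormalBasis.coe_toBasis]
      exact hB1
    rw [AlternatingMap.smul_apply, hFw, one_smul]
  -- normal form of Kform
  have hKE : Kform = ∑ k : Fin n, (-(lam k)) • (ι ℝ (u k) * ι ℝ (v k)) := by
    rw [hKform]
    have h1 : ∑ i : Fin (2*n), ∑ j : Fin (2*n),
        (inner ℝ (w i) (K (w j)) : ℝ) • (ι ℝ (w i) * ι ℝ (w j))
        = ∑ j : Fin (2*n), ι ℝ (K (w j)) * ι ℝ (w j) := by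
      rw [Finset.sum_comm]
      apply Finset.sum_congr rfl; intro j _
      simp_rw [← smul_mul_assoc]
      rw [← Finset.sum_mul, iota_repr]
    rw [h1, trace_form_indep K hK w EB]
    have h2 : ∑ j : Fin (2*n), ι ℝ (K (EB j)) * ι ℝ (EB j)
        = ∑ p : Fin n × Fin 2, ι ℝ (K (Ep p)) * ι ℝ (Ep p) := by
      rw [← Equiv.sum_comp pq (fun j => ι ℝ (K (EB j)) * ι ℝ (EB j))]
      apply Finset.sum_congr rfl; intro p _
      rw [hEBcoe]
      simp [hbE]
    rw [h2, Fintype.sum_prod_type, Finset.smul_sum]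
    apply Finset.sum_congr rfl; intro k _
    rw [Fin.sum_univ_two]
    have hu : Ep (k, 0) = u k := by simp [hEp]
    have hv : Ep (k, 1) = v k := by simp [hEp]
    rw [hu, hv, hKu k, hKv k, map_smul, map_smul, smul_mul_assoc, smul_mul_assoc,
      iota_anticomm (v k) (u k), smul_neg]
    module
  set Z : Fin n → ExteriorAlgebra ℝ W := fun k => ι ℝ (u k) * ι ℝ (v k) with hZ
  set c : Fin n → ℝ := fun k => -(lam k) with hc
  have hmem2 : Kform ∈ (LinearMap.range (ι ℝ : W →ₗ[ℝ] ExteriorAlgebra ℝ W)) ^ 2 := by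
    rw [hKE, sq]
    apply Submodule.sum_mem
    intro k _
    apply Submodule.smul_mem
    exact Submodule.mul_mem_mul (LinearMap.mem_range_self _ _) (LinearMap.mem_range_self _ _)
  have hBk : ∀ k : ℕ, k ≠ n → B (Kform ^ k) = 0 := by
    intro k hk
    apply hB0 (2*k) (by omega)
    rw [pow_mul]
    exact Submodule.pow_mem_pow _ hmem2 k
  have hBsum : B (∑ k ∈ Finset.range (2*n+1), ((k.factorial : ℝ))⁻¹ • Kform ^ k)
      = ((n.factorial : ℝ))⁻¹ * B (Kform ^ n) := by
    rw [map_sum, Finset.sum_eq_single n]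
    · rw [map_smul, smul_eq_mul]
    · intro k _ hkn; rw [map_smul, hBk k hkn, smul_zero]
    · intro hn; exact absurd (Finset.mem_range.mpr (by omega)) hn
  -- the W-family attached to an index function
  have hW2 : ∀ f : Fin n → Fin n, (List.ofFn fun k => Z (f k)).prod
      = ιMulti ℝ (2*n) ((Ep ∘ Prod.map f id) ∘ pq.symm) := by
    intro f
    rw [prod_pairs n (Ep ∘ Prod.map f id)]
    have he : (fun k : Fin n => Z (f k))
        = (fun k : Fin n => ι ℝ ((Ep ∘ Prod.map f id) (k, 0))
            * ι ℝ ((Ep ∘ Prod.map f id) (k, 1))) := by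
      funext k; simp [hZ, hEp]
    rw [he]
  have hterm : ∀ f : Fin n → Fin n,
      B ((List.ofFn fun k => c (f k) • Z (f k)).prod)
      = (∏ k, c (f k)) * F ((Ep ∘ Prod.map f id) ∘ pq.symm) := by
    intro f
    rw [ofFn_smul_prod n (fun k => c (f k)) (fun k => Z (f k)), map_smul, hW2 f,
      smul_eq_mul]
    rfl
  have hzero : ∀ f : Fin n → Fin n, ¬ Function.Injective f →
      F ((Ep ∘ Prod.map f id) ∘ pq.symm) = 0 := by
    intro f hf
    apply AlternatingMap.map_eq_zero_of_not_injective
    intro hinj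
    apply hf
    intro k1 k2 hk
    have h1 : ((Ep ∘ Prod.map f id) ∘ pq.symm) (pq (k1, 0))
        = ((Ep ∘ Prod.map f id) ∘ pq.symm) (pq (k2, 0)) := by
      simp only [Function.comp_apply, Equiv.symm_apply_apply, Prod.map_apply, id_eq, hk]
    have h2 := hinj h1
    have h3 : ((k1, (0 : Fin 2)) : Fin n × Fin 2) = (k2, 0) := pq.injective h2
    exact (Prod.mk.injEq _ _ _ _ ▸ h3).1
  have hinjF : ∀ f : Fin n → Fin n, Function.Injective f →
      (∏ k, c (f k)) * F ((Ep ∘ Prod.map f id) ∘ pq.symm) = (∏ k, c k) * F bE := by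
    intro f hf
    set fe := Equiv.ofBijective f (Finite.injective_iff_bijective.mp hf) with hfe
    have hfeapp : ∀ k, fe k = f k := fun k => rfl
    have hcomp : (Ep ∘ Prod.map f id) ∘ ⇑pq.symm
        = bE ∘ ⇑(pq.permCongr (fe.prodCongr (Equiv.refl (Fin 2)))) := by
      funext j
      simp [hbE, Equiv.permCongr_apply, Prod.map, hfeapp]
    have hsign : Equiv.Perm.sign (pq.permCongr (fe.prodCongr (Equiv.refl (Fin 2)))) = 1 := by
      rw [Equiv.Perm.sign_permCongr, Equiv.prodCongr_refl_right,
        Equiv.Perm.sign_prodCongrLeft]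
      rw [Finset.prod_const, Finset.card_univ, Fintype.card_fin]
      exact Int.units_sq _
    have hFeq : F ((Ep ∘ Prod.map f id) ∘ ⇑pq.symm) = F bE := by
      rw [hcomp, AlternatingMap.map_perm, hsign, one_smul]
    have hprod : (∏ k, c (f k)) = ∏ k, c k := Equiv.prod_comp fe c
    rw [hFeq, hprod]
  have hBn : B (Kform ^ n) = (n.factorial : ℝ) * ((∏ k, c k) * F bE) := by
    rw [hKE]
    rw [show (∑ k : Fin n, -lam k • ((ι ℝ) (u k) * (ι ℝ) (v k)))
        = ∑ k : Fin n, c k • Z k from rfl]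
    rw [sum_pow_expand n (fun k => c k • Z k) n, map_sum]
    simp_rw [hterm]
    set T : (Fin n → Fin n) → ℝ :=
      fun f => (∏ k, c (f k)) * F ((Ep ∘ Prod.map f id) ∘ ⇑pq.symm) with hT
    have hswap : ∑ f : Fin n → Fin n, T f = ∑ σ : Equiv.Perm (Fin n), T ⇑σ := by
      rw [← Finset.sum_image (s := Finset.univ)
        (g := fun σ : Equiv.Perm (Fin n) => ⇑σ) (f := T)
        (fun σ1 _ σ2 _ h => Equiv.coe_fn_injective h)]
      apply (Finset.sum_subset (Finset.subset_univ _) ?_).symm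
      intro f _ hfim
      have hninj : ¬ Function.Injective f := by
        intro hinj
        apply hfim
        rw [Finset.mem_image]
        exact ⟨Equiv.ofBijective f (Finite.injective_iff_bijective.mp hinj),
          Finset.mem_univ _, rfl⟩
      rw [hT]
      simp only
      rw [hzero f hninj, mul_zero]
    rw [hswap]
    have hconst : ∀ σ : Equiv.Perm (Fin n), T ⇑σ = (∏ k, c k) * F bE := by
      intro σ
      rw [hT]
      simp only
      exact hinjF ⇑σ σ.injective
    simp_rw [hconst]
    rw [Finset.sum_const, Finset.card_univ, Fintype.card_perm, Fintype.card_fin,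
      nsmul_eq_mul]
  -- put everything together on the Berezin side
  have hfac : (n.factorial : ℝ) ≠ 0 := Nat.cast_ne_zero.mpr n.factorial_ne_zero
  have hBtot : B (∑ k ∈ Finset.range (2 * n + 1), ((k.factorial : ℝ))⁻¹ • Kform ^ k)
      = (∏ k, c k) * F bE := by
    rw [hBsum, hBn, ← mul_assoc, inv_mul_cancel₀ hfac, one_mul]
  rw [hBtot]
  -- determinant of the change of basis squares to one
  have hd2 : (F bE) ^ 2 = 1 := by
    rw [hFdet bE]
    rcases w.det_to_matrix_orthonormalBasis_real EB with h | h <;>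
      rw [hEBcoe] at h <;> rw [h] <;> norm_num
  have hsq : ((∏ k, c k) * F bE) ^ 2 = ∏ k, lam k ^ 2 := by
    rw [mul_pow, hd2, mul_one, ← Finset.prod_pow]
    apply Finset.prod_congr rfl
    intro k _
    rw [hc]
    ring
  rw [hsq]
  -- determinant of K in the adapted basis
  rw [← LinearMap.det_toMatrix EB.toBasis K]
  set r : Fin 2 × Fin n ≃ Fin (2*n) := (Equiv.prodComm (Fin 2) (Fin n)).trans pq with hr
  rw [← Matrix.det_submatrix_equiv_self r]
  have hEBapp : ∀ (t : Fin 2) (k : Fin n), EB.toBasis (r (t, k)) = Ep (k, t) := by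
    intro t k
    rw [OrthonormalBasis.coe_toBasis, hEBcoe, hbE]
    simp [hr]
  have hM : (LinearMap.toMatrix EB.toBasis EB.toBasis K).submatrix ⇑r ⇑r
      = Matrix.blockDiagonal (fun k => !![0, -(lam k); lam k, 0]) := by
    ext ⟨t, k⟩ ⟨t', k'⟩
    rw [Matrix.submatrix_apply, LinearMap.toMatrix_apply, hEBapp, Matrix.blockDiagonal_apply]
    fin_cases t' <;> fin_cases t <;> simp only [Fin.zero_eta, Fin.mk_one]
    · -- t=0, t'=0 : entry is coefficient of Ep (k,0) in K (u k') = lam k' • Ep (k',1)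
      have h1 : Ep (k', (0:Fin 2)) = u k' := by simp [hEp]
      rw [h1, hKu k']
      have h2 : v k' = EB.toBasis (r (1, k')) := by rw [hEBapp]; simp [hEp]
      rw [h2, map_smul, Finsupp.smul_apply, Basis.repr_self]
      have hne : r ((1 : Fin 2), k') ≠ r ((0:Fin 2), k) := by
        intro h
        have h2 := r.injective h
        rw [Prod.mk.injEq] at h2
        exact absurd h2.1 (by decide)
      rw [Finsupp.single_apply, if_neg hne, smul_zero]
      simp
    · -- t=1, t'=0
      have h1 : Ep (k', (0:Fin 2)) = u k' := by simp [hEp]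
      rw [h1, hKu k']
      have h2 : v k' = EB.toBasis (r (1, k')) := by rw [hEBapp]; simp [hEp]
      rw [h2, map_smul, Finsupp.smul_apply, Basis.repr_self, Finsupp.single_apply]
      by_cases hkk : k' = k
      · subst hkk
        rw [if_pos rfl]
        simp
      · rw [if_neg (fun h => hkk (congrArg Prod.snd (r.injective h)))]
        rw [smul_zero]
        simp [Ne.symm hkk]
    · -- t=0, t'=1
      have h1 : Ep (k', (1:Fin 2)) = v k' := by simp [hEp]
      rw [h1, hKv k']
      have h2 : u k' = EB.toBasis (r (0, k')) := by rw [hEBapp]; simp [hEp]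
      rw [h2, map_smul, Finsupp.smul_apply, Basis.repr_self, Finsupp.single_apply]
      by_cases hkk : k' = k
      · subst hkk
        rw [if_pos rfl]
        simp
      · rw [if_neg (fun h => hkk (congrArg Prod.snd (r.injective h)))]
        rw [smul_zero]
        simp [Ne.symm hkk]
    · -- t=1, t'=1
      have h1 : Ep (k', (1:Fin 2)) = v k' := by simp [hEp]
      rw [h1, hKv k']
      have h2 : u k' = EB.toBasis (r (0, k')) := by rw [hEBapp]; simp [hEp]
      rw [h2, map_smul, Finsupp.smul_apply, Basis.repr_self, Finsupp.single_apply]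
      have hne : r ((0 : Fin 2), k') ≠ r ((1:Fin 2), k) := by
        intro h
        have h2 := r.injective h
        rw [Prod.mk.injEq] at h2
        exact absurd h2.1 (by decide)
      rw [if_neg hne, smul_zero]
      simp
  rw [hM, Matrix.det_blockDiagonal]
  apply Finset.prod_congr rfl
  intro k _
  rw [Matrix.det_fin_two_of]
  ring
end
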